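/- Fix reals 0 ≤ a_r < b_r and a_f < b_f ≤ 1, and let σ_r = σ(·; a_r, b_r) and σ_f = σ(·; a_f, b_f) be the corresponding C¹ transition functions. Let e₁ ∈ ℝ³ be the first standard basis vector. Then the weight function w(p_i, p_j, p_k, R) = ‖p_j − p_i‖·‖p_k − p_i‖·(1 − σ_r(‖p_j − p_i‖))·σ_f(⟨(p_j − p_i)/‖p_j − p_i‖, R e₁⟩)·(1 − σ_r(‖p_k − p_i‖))·σ_f(⟨(p_k − p_i)/‖p_k − p_i‖, R e₁⟩), viewed as a function of (p_i, p_j, p_k, R) ∈ ℝ³ × ℝ³ × ℝ³ × Matrix(3,3,ℝ), is continuously differentiable on the open set where p_j ≠ p_i and p_k ≠ p_i. -/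

import Mathlib

open scoped RealInnerProductSpace

noncomputable section

attribute [local instance] Matrix.normedAddCommGroup Matrix.normedSpace

abbrev E3 := EuclideanSpace ℝ (Fin 3)

/-- The smooth transition function `σ(·; a, b)`. -/
def transition (a b : ℝ) (x : ℝ) : ℝ :=
  if x < a then 0
  else if x ≤ b then (1 - Real.cos (Real.pi * (x - a) / (b - a))) / 2
  else 1

def transD (a b : ℝ) (x : ℝ) : ℝ :=
  Real.pi / (b - a) / 2 * Real.sin (Real.pi * (min (max ((x - a) / (b - a)) 0) 1))

lemma continuous_transD (a b : ℝ) : Continuous (transD a b) := by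
  apply continuous_const.mul
  exact Real.continuous_sin.comp <| continuous_const.mul <|
    ((continuous_id.sub continuous_const).div_const _).max continuous_const |>.min continuous_const

/-- The middle piece. -/
def midP (a b : ℝ) (x : ℝ) : ℝ := (1 - Real.cos (Real.pi * (x - a) / (b - a))) / 2

lemma hasDerivAt_midP (a b x : ℝ) :
    HasDerivAt (midP a b) (Real.pi / (b - a) / 2 * Real.sin (Real.pi * (x - a) / (b - a))) x := by
  have h1 : HasDerivAt (fun y : ℝ => Real.pi * (y - a) / (b - a)) (Real.pi / (b - a)) x := by
    simpa [mul_one] using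
      (((hasDerivAt_id x).sub_const a).const_mul Real.pi).div_const (b - a)
  have h2 := (Real.hasDerivAt_cos (Real.pi * (x - a) / (b - a))).comp x h1
  have h3 := ((hasDerivAt_const x (1:ℝ)).sub h2).div_const 2
  exact h3.congr_deriv (by ring)

lemma transD_eq_mid {a b : ℝ} (hab : a < b) {x : ℝ} (hax : a ≤ x) (hxb : x ≤ b) :
    transD a b x = Real.pi / (b - a) / 2 * Real.sin (Real.pi * (x - a) / (b - a)) := by
  have hba : (0:ℝ) < b - a := sub_pos.2 hab
  have h0 : 0 ≤ (x - a) / (b - a) := div_nonneg (by linarith) hba.le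
  have h1 : (x - a) / (b - a) ≤ 1 := by
    rw [div_le_one hba]; linarith
  rw [transD, max_eq_left h0, min_eq_left h1, mul_div_assoc]

lemma transition_hasDerivAt {a b : ℝ} (hab : a < b) (x : ℝ) :
    HasDerivAt (transition a b) (transD a b x) x := by
  have hba : (0:ℝ) < b - a := sub_pos.2 hab
  rcases lt_trichotomy x a with hxa | h | hax
  · -- x < a
    have he : transition a b =ᶠ[nhds x] fun _ => (0:ℝ) := by
      filter_upwards [Iio_mem_nhds hxa] with y hy
      rw [transition, if_pos (show y < a from hy)]
    have : transD a b x = 0 := by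
      have h0 : (x - a) / (b - a) ≤ 0 := div_nonpos_iff.2 (Or.inr ⟨by linarith, hba.le⟩)
      simp [transD, max_eq_right h0, min_eq_left, (by norm_num : (0:ℝ) ≤ 1)]
    rw [this]
    exact (hasDerivAt_const x (0:ℝ)).congr_of_eventuallyEq he

  · -- x = a
    replace h := h.symm
    subst h
    have hD0 : transD a b a = 0 := by
      rw [transD_eq_mid hab le_rfl hab.le]
      simp
    rw [hD0]
    have hval : transition a b a = 0 := by
      simp [transition, hab.le, lt_irrefl]
    have hleft : HasDerivWithinAt (transition a b) 0 (Set.Iic a) a := by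
      refine (hasDerivWithinAt_const a _ (0:ℝ)).congr (fun y hy => ?_) hval
      rcases lt_or_eq_of_le (show y ≤ a from hy) with h | rfl
      · simp [transition, h]
      · exact hval
    have hright : HasDerivWithinAt (transition a b) 0 (Set.Ici a) a := by
      have hmid := (hasDerivAt_midP a b a).hasDerivWithinAt (s := Set.Ici a)
      have : Real.pi / (b - a) / 2 * Real.sin (Real.pi * (a - a) / (b - a)) = 0 := by simp
      rw [this] at hmid
      refine hmid.congr_of_eventuallyEq ?_ (by simp [hval, midP])
      filter_upwards [Filter.inter_mem self_mem_nhdsWithin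
        (mem_nhdsWithin_of_mem_nhds (Iio_mem_nhds hab))] with y hy
      simp [transition, midP, not_lt.2 (show a ≤ y from hy.1), le_of_lt (show y < b from hy.2)]
    have := hleft.union hright
    rwa [Set.Iic_union_Ici, hasDerivWithinAt_univ] at this
  · rcases lt_trichotomy x b with hxb | h | hbx
    · -- a < x < b
      have he : transition a b =ᶠ[nhds x] midP a b := by
        filter_upwards [Ioo_mem_nhds hax hxb] with y hy
        simp [transition, midP, not_lt.2 hy.1.le, hy.2.le]
      rw [transD_eq_mid hab hax.le hxb.le]
      exact (hasDerivAt_midP a b x).congr_of_eventuallyEq he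
    · -- x = b
      replace h := h.symm
      subst h
      have hD0 : transD a b b = 0 := by
        rw [transD_eq_mid hab hab.le le_rfl]
        rw [mul_div_assoc, div_self hba.ne', mul_one, Real.sin_pi, mul_zero]
      rw [hD0]
      have hval : transition a b b = 1 := by
        rw [transition, if_neg (not_lt.2 hab.le), if_pos le_rfl, mul_div_assoc,
          div_self hba.ne', mul_one, Real.cos_pi]
        norm_num
      have hleft : HasDerivWithinAt (transition a b) 0 (Set.Iic b) b := by
        have hmid := (hasDerivAt_midP a b b).hasDerivWithinAt (s := Set.Iic b)
        have : Real.pi / (b - a) / 2 * Real.sin (Real.pi * (b - a) / (b - a)) = 0 := by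
          rw [mul_div_assoc, div_self hba.ne', mul_one, Real.sin_pi, mul_zero]
        rw [this] at hmid
        refine hmid.congr_of_eventuallyEq ?_ ?_
        · filter_upwards [Filter.inter_mem self_mem_nhdsWithin
            (mem_nhdsWithin_of_mem_nhds (Ioi_mem_nhds hab))] with y hy
          simp [transition, midP, not_lt.2 (le_of_lt (show a < y from hy.2)), (show y ≤ b from hy.1)]
        · rw [hval, midP, mul_div_assoc, div_self hba.ne', mul_one, Real.cos_pi]; norm_num
      have hright : HasDerivWithinAt (transition a b) 0 (Set.Ici b) b := by
        refine (hasDerivWithinAt_const b _ (1:ℝ)).congr (fun y hy => ?_) hval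
        rcases lt_or_eq_of_le (show b ≤ y from hy) with h | rfl
        · simp [transition, not_lt.2 (le_of_lt (hab.trans h)), not_le.2 h]
        · exact hval
      have := hleft.union hright
      rwa [Set.Iic_union_Ici, hasDerivWithinAt_univ] at this
    · -- b < x
      have he : transition a b =ᶠ[nhds x] fun _ => (1:ℝ) := by
        filter_upwards [Ioi_mem_nhds hbx] with y hy
        simp [transition, not_lt.2 (le_of_lt (hab.trans hy)), not_le.2 (show b < y from hy)]
      have : transD a b x = 0 := by
        have h1 : (1:ℝ) ≤ (x - a) / (b - a) := by
          rw [le_div_iff₀ hba]; linarith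
        have h0 : (0:ℝ) ≤ (x - a) / (b - a) := by linarith
        simp [transD, max_eq_left h0, min_eq_right h1]
      rw [this]
      exact (hasDerivAt_const x (1:ℝ)).congr_of_eventuallyEq he

lemma transition_contDiff {a b : ℝ} (hab : a < b) : ContDiff ℝ 1 (transition a b) := by
  rw [contDiff_one_iff_deriv]
  refine ⟨fun x => (transition_hasDerivAt hab x).differentiableAt, ?_⟩
  have hderiv : deriv (transition a b) = transD a b :=
    funext fun x => (transition_hasDerivAt hab x).deriv
  rw [hderiv]
  exact continuous_transD a b

/-- The angle weight
`w(p_i, p_j, p_k, R) = d_ij d_ik (1 − σ_r(d_ij)) σ_f(ζ_ij) (1 − σ_r(d_ik)) σ_f(ζ_ik)`,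
where `d_il = ‖p_l − p_i‖` and `ζ_il = ⟨(p_l − p_i)/d_il, R e₁⟩`. -/
def angleWeight (ar br af bf : ℝ)
    (q : E3 × E3 × E3 × Matrix (Fin 3) (Fin 3) ℝ) : ℝ :=
  let pi' := q.1
  let pj := q.2.1
  let pk := q.2.2.1
  let R := q.2.2.2
  let e₁ : Fin 3 → ℝ := ![1, 0, 0]
  let axis : E3 := (EuclideanSpace.equiv (Fin 3) ℝ).symm (R.mulVec e₁)
  ‖pj - pi'‖ * ‖pk - pi'‖ *
    ((1 - transition ar br ‖pj - pi'‖) *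
      transition af bf ⟪‖pj - pi'‖⁻¹ • (pj - pi'), axis⟫ *
      (1 - transition ar br ‖pk - pi'‖) *
      transition af bf ⟪‖pk - pi'‖⁻¹ • (pk - pi'), axis⟫)

/-- The angle weight function is continuously differentiable in the poses
`(p_i, p_j, p_k, R)` on the open collision-free set `{p_j ≠ p_i, p_k ≠ p_i}`. -/
theorem angleWeight_contDiffOn (ar br af bf : ℝ)
    (har : 0 ≤ ar) (hr : ar < br) (hf : af < bf) (hbf : bf ≤ 1) :
    ContDiffOn ℝ 1 (angleWeight ar br af bf)
      {q : E3 × E3 × E3 × Matrix (Fin 3) (Fin 3) ℝ | q.2.1 ≠ q.1 ∧ q.2.2.1 ≠ q.1} := by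
  intro q hq
  obtain ⟨h1, h2⟩ := hq
  apply ContDiffAt.contDiffWithinAt
  have hsubj : ContDiffAt ℝ 1 (fun q : E3 × E3 × E3 × Matrix (Fin 3) (Fin 3) ℝ =>
      q.2.1 - q.1) q := ((contDiff_fst.comp contDiff_snd).sub contDiff_fst).contDiffAt
  have hsubk : ContDiffAt ℝ 1 (fun q : E3 × E3 × E3 × Matrix (Fin 3) (Fin 3) ℝ =>
      q.2.2.1 - q.1) q :=
    ((contDiff_fst.comp (contDiff_snd.comp contDiff_snd)).sub contDiff_fst).contDiffAt
  have hR : ContDiff ℝ 1 (fun q : E3 × E3 × E3 × Matrix (Fin 3) (Fin 3) ℝ => q.2.2.2) :=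
    contDiff_snd.comp (contDiff_snd.comp contDiff_snd)
  have hmv : ContDiff ℝ 1 (fun q : E3 × E3 × E3 × Matrix (Fin 3) (Fin 3) ℝ =>
      (q.2.2.2).mulVec ![1, 0, 0]) := by
    rw [contDiff_pi]
    intro i
    simp only [Matrix.mulVec, dotProduct]
    apply ContDiff.sum
    intro j _
    exact (((ContinuousLinearMap.proj (R := ℝ) (φ := fun _ : Fin 3 => ℝ) j).contDiff).comp
      (((ContinuousLinearMap.proj (R := ℝ) (φ := fun _ : Fin 3 => Fin 3 → ℝ) i).contDiff).comp
        hR)).mul contDiff_const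
  have haxis : ContDiff ℝ 1 (fun q : E3 × E3 × E3 × Matrix (Fin 3) (Fin 3) ℝ =>
      (EuclideanSpace.equiv (Fin 3) ℝ).symm ((q.2.2.2).mulVec ![1, 0, 0])) :=
    (EuclideanSpace.equiv (Fin 3) ℝ).symm.contDiff.comp hmv
  have hnj : q.2.1 - q.1 ≠ 0 := sub_ne_zero_of_ne h1
  have hnk : q.2.2.1 - q.1 ≠ 0 := sub_ne_zero_of_ne h2
  have hnormj := hsubj.norm ℝ hnj
  have hnormk := hsubk.norm ℝ hnk
  have hsmulj := (hnormj.inv (norm_ne_zero_iff.2 hnj)).smul hsubj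
  have hsmulk := (hnormk.inv (norm_ne_zero_iff.2 hnk)).smul hsubk
  have hinnerj := hsmulj.inner ℝ haxis.contDiffAt
  have hinnerk := hsmulk.inner ℝ haxis.contDiffAt
  have htj := ((transition_contDiff hf).contDiffAt).comp q hinnerj
  have htk := ((transition_contDiff hf).contDiffAt).comp q hinnerk
  have hrj := ((transition_contDiff hr).contDiffAt).comp q hnormj
  have hrk := ((transition_contDiff hr).contDiffAt).comp q hnormk
  exact (hnormj.mul hnormk).mul
    ((((contDiffAt_const.sub hrj).mul htj).mul (contDiffAt_const.sub hrk)).mul htk)
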